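/- Combining the two cases: for any H ∈ (0,1], any 0 ≤ t_0 ≤ ... ≤ t_n ≤ T, increments Δ_j = B^H_{t_j} - B^H_{t_{j-1}}, and signs ε_j ∈ {-1,+1}, one has Var(Σ_{j=1}^n ε_j Δ_j) ≤ 2 T^{2H} n^{(1-2H)_+}, where (x)_+ = max(x,0). -/

import Mathlib

open MeasureTheory Real

private lemma fin_telescope {M : Type*} [AddCommGroup M] :
    ∀ (n : ℕ) (g : Fin (n + 1) → M),
      (∑ j : Fin n, (g j.succ - g j.castSucc)) = g (Fin.last n) - g 0 := by
  intro n
  induction n with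
  | zero => intro g; simp
  | succ m ih =>
    intro g
    rw [Fin.sum_univ_castSucc]
    have h := ih (fun i => g i.castSucc)
    simp only [Fin.succ_castSucc] at h ⊢
    rw [h]
    simp only [Fin.succ_last, Fin.castSucc_zero]
    abel

private lemma convex_pair {f : ℝ → ℝ} (hf : ConvexOn ℝ (Set.Ici 0) f)
    {x y u v : ℝ} (hx : 0 ≤ x) (hxu : x ≤ u) (huy : u ≤ y) (huv : u + v = x + y) :
    f u + f v ≤ f x + f y := by
  rcases eq_or_lt_of_le (hxu.trans huy) with hxy | hxy
  · have h1 : u = x := le_antisymm (hxy ▸ huy) hxu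
    have h2 : v = y := by linarith
    rw [h1, h2]
  · have hyx : 0 < y - x := sub_pos.2 hxy
    have hv : v = x + y - u := by linarith
    set a : ℝ := (y - u) / (y - x) with ha_def
    set b : ℝ := (u - x) / (y - x) with hb_def
    have ha : 0 ≤ a := div_nonneg (by linarith) hyx.le
    have hb : 0 ≤ b := div_nonneg (by linarith) hyx.le
    have hab : a + b = 1 := by
      rw [ha_def, hb_def, ← add_div, div_eq_one_iff_eq hyx.ne']
      ring
    have hxm : x ∈ Set.Ici (0:ℝ) := hx
    have hym : y ∈ Set.Ici (0:ℝ) := le_trans hx (by linarith)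
    have h1 := hf.2 hxm hym ha hb hab
    have h2 := hf.2 hxm hym hb ha (by linarith)
    simp only [smul_eq_mul] at h1 h2
    have e1 : a * x + b * y = u := by
      rw [ha_def, hb_def]
      field_simp
      ring
    have e2 : b * x + a * y = v := by
      rw [hv, ha_def, hb_def]
      field_simp
      ring
    rw [e1] at h1
    rw [e2] at h2
    have e3 : a * f x + b * f y + (b * f x + a * f y) = f x + f y := by
      linear_combination (f x + f y) * hab
    linarith

private lemma concave_pair {f : ℝ → ℝ} (hf : ConcaveOn ℝ (Set.Ici 0) f)
    {x y u v : ℝ} (hx : 0 ≤ x) (hxu : x ≤ u) (huy : u ≤ y) (huv : u + v = x + y) :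
    f x + f y ≤ f u + f v := by
  have h := convex_pair hf.neg hx hxu huy huv
  simp only [Pi.neg_apply] at h
  linarith

private lemma integrable_mul_of_memL2 {Ω : Type*} [MeasurableSpace Ω] {μ : Measure Ω}
    {f g : Ω → ℝ} (hf : MemLp f 2 μ) (hg : MemLp g 2 μ) :
    Integrable (fun ω => f ω * g ω) μ := by
  have h : MemLp (f • g) 1 μ := hg.smul hf
  have h2 := memLp_one_iff_integrable.mp h
  exact h2

private lemma sum_rpow_le_jensen {n : ℕ} (δ : Fin n → ℝ) (hδ : ∀ j, 0 ≤ δ j)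
    {p : ℝ} (hp0 : 0 < p) (hp1 : p < 1) :
    ∑ j, δ j ^ p ≤ (n : ℝ) ^ (1 - p) * (∑ j, δ j) ^ p := by
  rcases Nat.eq_zero_or_pos n with rfl | hn
  · simp only [Finset.univ_eq_empty, Finset.sum_empty, Nat.cast_zero]
    rw [Real.zero_rpow (by linarith : (1:ℝ) - p ≠ 0), Real.zero_rpow hp0.ne', mul_zero]
  · have hn' : (0:ℝ) < n := by exact_mod_cast hn
    have hw : ∑ _j : Fin n, (1:ℝ)/n = 1 := by
      rw [Finset.sum_const, Finset.card_univ, Fintype.card_fin, nsmul_eq_mul]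
      field_simp
    have key := Real.arith_mean_le_rpow_mean (Finset.univ) (fun _ => (1:ℝ)/n)
      (fun j => δ j ^ p) (fun i _ => by positivity) hw
      (fun i _ => Real.rpow_nonneg (hδ i) p) (p := 1/p)
      (by rw [le_div_iff₀ hp0]; linarith)
    have hz : ∀ j : Fin n, (δ j ^ p) ^ ((1:ℝ)/p) = δ j := by
      intro j
      rw [← Real.rpow_mul (hδ j), mul_one_div_cancel hp0.ne', Real.rpow_one]
    simp only [hz, one_div_one_div] at key
    rw [← Finset.mul_sum, ← Finset.mul_sum] at key
    have hs0 : 0 ≤ ∑ i, δ i := Finset.sum_nonneg fun i _ => hδ i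
    rw [Real.mul_rpow (by positivity) hs0] at key
    have h2 : ∑ i, δ i ^ p ≤ (n:ℝ) * ((1/(n:ℝ)) ^ p * (∑ i, δ i) ^ p) := by
      have h3 := mul_le_mul_of_nonneg_left key hn'.le
      calc ∑ i, δ i ^ p = (n:ℝ) * (1/(n:ℝ) * ∑ i, δ i ^ p) := by field_simp
        _ ≤ _ := h3
    refine h2.trans_eq ?_
    have hnp : (n:ℝ) * ((1:ℝ)/(n:ℝ)) ^ p = (n:ℝ) ^ (1 - p) := by
      rw [Real.rpow_sub hn', Real.rpow_one, one_div, Real.inv_rpow hn'.le,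
        div_eq_mul_inv]
    rw [← mul_assoc, hnp]

/-- For any `H ∈ (0,1]`, any `0 ≤ t_0 ≤ ... ≤ t_n ≤ T`, increments
`Δ_j = B^H_{t_j} - B^H_{t_{j-1}}`, and signs `ε_j ∈ {-1,+1}`, one has
`Var(Σ_{j=1}^n ε_j Δ_j) ≤ 2 T^{2H} n^{(1-2H)_+}` where `(x)_+ = max(x,0)`.
(The variance of the centered sum is its second moment.) -/
theorem fbm_signed_sum_var {Ω : Type*} [MeasurableSpace Ω] (μ : Measure Ω)
    [IsProbabilityMeasure μ]
    (H : ℝ) (hH : H ∈ Set.Ioc (0 : ℝ) 1) (B : ℝ → Ω → ℝ)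
    (hmem : ∀ t, 0 ≤ t → MemLp (B t) 2 μ)
    (hzero : ∀ ω, B 0 ω = 0)
    (hcent : ∀ t, 0 ≤ t → ∫ ω, B t ω ∂μ = 0)
    (hcov : ∀ s t, 0 ≤ s → 0 ≤ t →
      ∫ ω, B s ω * B t ω ∂μ =
        (1 / 2) * (s ^ (2 * H) + t ^ (2 * H) - |s - t| ^ (2 * H)))
    (n : ℕ) (T : ℝ) (t : Fin (n + 1) → ℝ) (ht0 : 0 ≤ t 0) (hmono : Monotone t)
    (htT : t (Fin.last n) ≤ T)
    (ε : Fin n → ℝ) (hε : ∀ j, ε j = 1 ∨ ε j = -1) :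
    ∫ ω, (∑ j : Fin n, ε j * (B (t j.succ) ω - B (t j.castSucc) ω)) ^ 2 ∂μ ≤
      2 * T ^ (2 * H) * (n : ℝ) ^ (max (1 - 2 * H) 0) := by
  obtain ⟨hH0, hH1⟩ := hH
  have hp0 : 0 < 2 * H := by linarith
  have htnn : ∀ j, 0 ≤ t j := fun j => le_trans ht0 (hmono (Fin.zero_le j))
  have hmul : ∀ a b : ℝ, 0 ≤ a → 0 ≤ b →
      Integrable (fun ω => B a ω * B b ω) μ := fun a b ha hb =>
    integrable_mul_of_memL2 (hmem a ha) (hmem b hb)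
  -- covariance of increments
  have hC : ∀ a b c d : ℝ, 0 ≤ a → 0 ≤ b → 0 ≤ c → 0 ≤ d →
      ∫ ω, (B b ω - B a ω) * (B d ω - B c ω) ∂μ
        = (|b - c| ^ (2*H) + |a - d| ^ (2*H) - |b - d| ^ (2*H) - |a - c| ^ (2*H)) / 2 := by
    intro a b c d ha hb hc hd
    have e1 : (fun ω => (B b ω - B a ω) * (B d ω - B c ω))
        = fun ω => B b ω * B d ω - B b ω * B c ω - (B a ω * B d ω - B a ω * B c ω) := by
      funext ω; ring
    have i1 : Integrable (fun ω => B b ω * B d ω - B b ω * B c ω) μ :=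
      (hmul b d hb hd).sub (hmul b c hb hc)
    have i2 : Integrable (fun ω => B a ω * B d ω - B a ω * B c ω) μ :=
      (hmul a d ha hd).sub (hmul a c ha hc)
    rw [e1, integral_sub i1 i2,
      integral_sub (hmul b d hb hd) (hmul b c hb hc),
      integral_sub (hmul a d ha hd) (hmul a c ha hc),
      hcov b d hb hd, hcov b c hb hc, hcov a d ha hd, hcov a c ha hc]
    ring
  have hint : ∀ j k : Fin n, Integrable
      (fun ω => (B (t j.succ) ω - B (t j.castSucc) ω) *
        (B (t k.succ) ω - B (t k.castSucc) ω)) μ := by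
    intro j k
    exact integrable_mul_of_memL2 ((hmem _ (htnn _)).sub (hmem _ (htnn _)))
      ((hmem _ (htnn _)).sub (hmem _ (htnn _)))
  -- expansion of the square of the signed sum
  have key : ∀ e : Fin n → ℝ,
      ∫ ω, (∑ j : Fin n, e j * (B (t j.succ) ω - B (t j.castSucc) ω)) ^ 2 ∂μ
        = ∑ j : Fin n, ∑ k : Fin n, e j * e k *
            ∫ ω, (B (t j.succ) ω - B (t j.castSucc) ω) *
              (B (t k.succ) ω - B (t k.castSucc) ω) ∂μ := by
    intro e
    have e2 : (fun ω => (∑ j : Fin n, e j * (B (t j.succ) ω - B (t j.castSucc) ω)) ^ 2)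
        = fun ω => ∑ j : Fin n, ∑ k : Fin n, e j * e k *
            ((B (t j.succ) ω - B (t j.castSucc) ω) *
              (B (t k.succ) ω - B (t k.castSucc) ω)) := by
      funext ω
      rw [sq, Finset.sum_mul_sum]
      exact Finset.sum_congr rfl fun j _ => Finset.sum_congr rfl fun k _ => by ring
    rw [e2, integral_finset_sum _ (fun j _ =>
      integrable_finset_sum _ (fun k _ => (hint j k).const_mul _))]
    refine Finset.sum_congr rfl fun j _ => ?_
    rw [integral_finset_sum _ (fun k _ => (hint j k).const_mul _)]
    exact Finset.sum_congr rfl fun k _ => integral_const_mul _ _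
  -- telescoping: total sum of the covariances
  have hlast0 : t 0 ≤ t (Fin.last n) := hmono (Fin.zero_le _)
  have htotal : ∑ j : Fin n, ∑ k : Fin n,
      (∫ ω, (B (t j.succ) ω - B (t j.castSucc) ω) *
        (B (t k.succ) ω - B (t k.castSucc) ω) ∂μ)
      = (t (Fin.last n) - t 0) ^ (2*H) := by
    have h1 := key (fun _ => 1)
    simp only [one_mul] at h1
    rw [← h1]
    have e3 : (fun ω => (∑ j : Fin n, (B (t j.succ) ω - B (t j.castSucc) ω)) ^ 2)
        = fun ω => (B (t (Fin.last n)) ω - B (t 0) ω) *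
            (B (t (Fin.last n)) ω - B (t 0) ω) := by
      funext ω
      rw [show (∑ j : Fin n, (B (t j.succ) ω - B (t j.castSucc) ω))
          = B (t (Fin.last n)) ω - B (t 0) ω from fin_telescope n (fun i => B (t i) ω), sq]
    rw [e3, hC (t 0) (t (Fin.last n)) (t 0) (t (Fin.last n)) ht0 (htnn _) ht0 (htnn _)]
    simp only [sub_self, abs_zero, Real.zero_rpow hp0.ne']
    rw [abs_sub_comm (t 0) (t (Fin.last n)), abs_of_nonneg (sub_nonneg.2 hlast0)]
    ring
  -- value of each covariance
  have hIval : ∀ j k : Fin n,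
      (∫ ω, (B (t j.succ) ω - B (t j.castSucc) ω) *
        (B (t k.succ) ω - B (t k.castSucc) ω) ∂μ)
      = (|t j.succ - t k.castSucc| ^ (2*H) + |t j.castSucc - t k.succ| ^ (2*H)
          - |t j.succ - t k.succ| ^ (2*H) - |t j.castSucc - t k.castSucc| ^ (2*H)) / 2 :=
    fun j k => hC _ _ _ _ (htnn _) (htnn _) (htnn _) (htnn _)
  have hIsymm : ∀ j k : Fin n,
      (∫ ω, (B (t j.succ) ω - B (t j.castSucc) ω) *
        (B (t k.succ) ω - B (t k.castSucc) ω) ∂μ)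
      = ∫ ω, (B (t k.succ) ω - B (t k.castSucc) ω) *
          (B (t j.succ) ω - B (t j.castSucc) ω) ∂μ := by
    intro j k
    rw [show (fun ω => (B (t j.succ) ω - B (t j.castSucc) ω) *
        (B (t k.succ) ω - B (t k.castSucc) ω))
      = fun ω => (B (t k.succ) ω - B (t k.castSucc) ω) *
        (B (t j.succ) ω - B (t j.castSucc) ω) from funext fun ω => mul_comm _ _]
  have hIdiag : ∀ j : Fin n,
      (∫ ω, (B (t j.succ) ω - B (t j.castSucc) ω) *
        (B (t j.succ) ω - B (t j.castSucc) ω) ∂μ)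
      = (t j.succ - t j.castSucc) ^ (2*H) := by
    intro j
    have h1 : t j.castSucc ≤ t j.succ := hmono (Fin.castSucc_le_succ j)
    rw [hIval j j]
    simp only [sub_self, abs_zero, Real.zero_rpow hp0.ne']
    rw [abs_sub_comm (t j.castSucc) (t j.succ), abs_of_nonneg (sub_nonneg.2 h1)]
    ring
  -- goal rewriting
  rw [key ε]
  rcases le_or_gt 1 (2*H) with hp1 | hp1
  · -- H ≥ 1/2 : all covariances are nonnegative
    have hIpos : ∀ j k : Fin n, j < k →
        0 ≤ ∫ ω, (B (t j.succ) ω - B (t j.castSucc) ω) *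
          (B (t k.succ) ω - B (t k.castSucc) ω) ∂μ := by
      intro j k hjk
      have hab : t j.castSucc ≤ t j.succ := hmono (Fin.castSucc_le_succ j)
      have hbc : t j.succ ≤ t k.castSucc := hmono (Fin.succ_le_castSucc_iff.mpr hjk)
      have hcd : t k.castSucc ≤ t k.succ := hmono (Fin.castSucc_le_succ k)
      rw [hIval j k,
        abs_sub_comm (t j.succ) (t k.castSucc),
        abs_sub_comm (t j.castSucc) (t k.succ),
        abs_sub_comm (t j.succ) (t k.succ),
        abs_sub_comm (t j.castSucc) (t k.castSucc),
        abs_of_nonneg (by linarith : (0:ℝ) ≤ t k.castSucc - t j.succ),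
        abs_of_nonneg (by linarith : (0:ℝ) ≤ t k.succ - t j.castSucc),
        abs_of_nonneg (by linarith : (0:ℝ) ≤ t k.succ - t j.succ),
        abs_of_nonneg (by linarith : (0:ℝ) ≤ t k.castSucc - t j.castSucc)]
      have h := convex_pair (convexOn_rpow hp1)
        (x := t k.castSucc - t j.succ) (u := t k.castSucc - t j.castSucc)
        (y := t k.succ - t j.castSucc) (v := t k.succ - t j.succ)
        (by linarith) (by linarith) (by linarith) (by ring)
      linarith
    have hInn : ∀ j k : Fin n,
        0 ≤ ∫ ω, (B (t j.succ) ω - B (t j.castSucc) ω) *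
          (B (t k.succ) ω - B (t k.castSucc) ω) ∂μ := by
      intro j k
      rcases lt_trichotomy j k with h | h | h
      · exact hIpos j k h
      · subst h
        rw [hIdiag j]
        exact Real.rpow_nonneg (sub_nonneg.2 (hmono (Fin.castSucc_le_succ j))) _
      · rw [hIsymm]; exact hIpos k j h
    have hmax : max (1 - 2*H) 0 = 0 := max_eq_right (by linarith)
    rw [hmax, Real.rpow_zero, mul_one]
    have hstep : (∑ j : Fin n, ∑ k : Fin n, ε j * ε k *
        ∫ ω, (B (t j.succ) ω - B (t j.castSucc) ω) *
          (B (t k.succ) ω - B (t k.castSucc) ω) ∂μ)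
        ≤ ∑ j : Fin n, ∑ k : Fin n,
            ∫ ω, (B (t j.succ) ω - B (t j.castSucc) ω) *
              (B (t k.succ) ω - B (t k.castSucc) ω) ∂μ := by
      refine Finset.sum_le_sum fun j _ => Finset.sum_le_sum fun k _ => ?_
      have he : ε j * ε k ≤ 1 := by
        rcases hε j with h' | h' <;> rcases hε k with h'' | h'' <;> norm_num [h', h'']
      calc ε j * ε k * _ ≤ 1 * _ := mul_le_mul_of_nonneg_right he (hInn j k)
        _ = _ := one_mul _
    refine hstep.trans ?_
    rw [htotal]
    have hT0 : 0 ≤ T := le_trans (htnn _) htT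
    have h1 : (t (Fin.last n) - t 0) ^ (2*H) ≤ T ^ (2*H) :=
      Real.rpow_le_rpow (sub_nonneg.2 hlast0) (by linarith) hp0.le
    have h2 : 0 ≤ T ^ (2*H) := Real.rpow_nonneg hT0 _
    linarith
  · -- H < 1/2 : off-diagonal covariances are nonpositive
    have hIneg : ∀ j k : Fin n, j < k →
        (∫ ω, (B (t j.succ) ω - B (t j.castSucc) ω) *
          (B (t k.succ) ω - B (t k.castSucc) ω) ∂μ) ≤ 0 := by
      intro j k hjk
      have hab : t j.castSucc ≤ t j.succ := hmono (Fin.castSucc_le_succ j)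
      have hbc : t j.succ ≤ t k.castSucc := hmono (Fin.succ_le_castSucc_iff.mpr hjk)
      have hcd : t k.castSucc ≤ t k.succ := hmono (Fin.castSucc_le_succ k)
      rw [hIval j k,
        abs_sub_comm (t j.succ) (t k.castSucc),
        abs_sub_comm (t j.castSucc) (t k.succ),
        abs_sub_comm (t j.succ) (t k.succ),
        abs_sub_comm (t j.castSucc) (t k.castSucc),
        abs_of_nonneg (by linarith : (0:ℝ) ≤ t k.castSucc - t j.succ),
        abs_of_nonneg (by linarith : (0:ℝ) ≤ t k.succ - t j.castSucc),
        abs_of_nonneg (by linarith : (0:ℝ) ≤ t k.succ - t j.succ),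
        abs_of_nonneg (by linarith : (0:ℝ) ≤ t k.castSucc - t j.castSucc)]
      have h := concave_pair (Real.concaveOn_rpow hp0.le hp1.le)
        (x := t k.castSucc - t j.succ) (u := t k.castSucc - t j.castSucc)
        (y := t k.succ - t j.castSucc) (v := t k.succ - t j.succ)
        (by linarith) (by linarith) (by linarith) (by ring)
      linarith
    have hIle : ∀ j k : Fin n, j ≠ k →
        (∫ ω, (B (t j.succ) ω - B (t j.castSucc) ω) *
          (B (t k.succ) ω - B (t k.castSucc) ω) ∂μ) ≤ 0 := by
      intro j k hjk
      rcases lt_or_gt_of_ne hjk with h | h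
      · exact hIneg j k h
      · rw [hIsymm]; exact hIneg k j h
    have hmax : max (1 - 2*H) 0 = 1 - 2*H := max_eq_left (by linarith)
    rw [hmax]
    have hstep : (∑ j : Fin n, ∑ k : Fin n, ε j * ε k *
        ∫ ω, (B (t j.succ) ω - B (t j.castSucc) ω) *
          (B (t k.succ) ω - B (t k.castSucc) ω) ∂μ)
        ≤ ∑ j : Fin n, ∑ k : Fin n,
            (2 * (if j = k then
              (∫ ω, (B (t j.succ) ω - B (t j.castSucc) ω) *
                (B (t k.succ) ω - B (t k.castSucc) ω) ∂μ) else 0)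
             - ∫ ω, (B (t j.succ) ω - B (t j.castSucc) ω) *
                (B (t k.succ) ω - B (t k.castSucc) ω) ∂μ) := by
      refine Finset.sum_le_sum fun j _ => Finset.sum_le_sum fun k _ => ?_
      by_cases h : j = k
      · subst h
        rw [if_pos rfl]
        have he : ε j * ε j = 1 := by rcases hε j with h' | h' <;> rw [h'] <;> norm_num
        rw [he, one_mul]
        linarith
      · simp only [if_neg h, mul_zero, zero_sub]
        have he : -1 ≤ ε j * ε k := by
          rcases hε j with h' | h' <;> rcases hε k with h'' | h'' <;> norm_num [h', h'']
        have hC0 := hIle j k h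
        nlinarith
    refine hstep.trans ?_
    have hsplit : (∑ j : Fin n, ∑ k : Fin n,
        (2 * (if j = k then
          (∫ ω, (B (t j.succ) ω - B (t j.castSucc) ω) *
            (B (t k.succ) ω - B (t k.castSucc) ω) ∂μ) else 0)
         - ∫ ω, (B (t j.succ) ω - B (t j.castSucc) ω) *
            (B (t k.succ) ω - B (t k.castSucc) ω) ∂μ))
        = 2 * (∑ j : Fin n,
            ∫ ω, (B (t j.succ) ω - B (t j.castSucc) ω) *
              (B (t j.succ) ω - B (t j.castSucc) ω) ∂μ)
          - ∑ j : Fin n, ∑ k : Fin n,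
              ∫ ω, (B (t j.succ) ω - B (t j.castSucc) ω) *
                (B (t k.succ) ω - B (t k.castSucc) ω) ∂μ := by
      have hrow : ∀ j : Fin n, (∑ k : Fin n,
          (2 * (if j = k then
            (∫ ω, (B (t j.succ) ω - B (t j.castSucc) ω) *
              (B (t k.succ) ω - B (t k.castSucc) ω) ∂μ) else 0)
           - ∫ ω, (B (t j.succ) ω - B (t j.castSucc) ω) *
              (B (t k.succ) ω - B (t k.castSucc) ω) ∂μ))
          = 2 * (∫ ω, (B (t j.succ) ω - B (t j.castSucc) ω) *
              (B (t j.succ) ω - B (t j.castSucc) ω) ∂μ)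
            - ∑ k : Fin n, ∫ ω, (B (t j.succ) ω - B (t j.castSucc) ω) *
                (B (t k.succ) ω - B (t k.castSucc) ω) ∂μ := by
        intro j
        rw [Finset.sum_sub_distrib, ← Finset.mul_sum, Finset.sum_ite_eq,
          if_pos (Finset.mem_univ j)]
      calc (∑ j : Fin n, ∑ k : Fin n, _) = ∑ j : Fin n,
          (2 * (∫ ω, (B (t j.succ) ω - B (t j.castSucc) ω) *
              (B (t j.succ) ω - B (t j.castSucc) ω) ∂μ)
            - ∑ k : Fin n, ∫ ω, (B (t j.succ) ω - B (t j.castSucc) ω) *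
                (B (t k.succ) ω - B (t k.castSucc) ω) ∂μ) :=
          Finset.sum_congr rfl fun j _ => hrow j
        _ = _ := by rw [Finset.sum_sub_distrib, ← Finset.mul_sum]
    rw [hsplit]
    have hnn : 0 ≤ ∑ j : Fin n, ∑ k : Fin n,
        ∫ ω, (B (t j.succ) ω - B (t j.castSucc) ω) *
          (B (t k.succ) ω - B (t k.castSucc) ω) ∂μ := by
      rw [htotal]
      exact Real.rpow_nonneg (sub_nonneg.2 hlast0) _
    have hdiag : (∑ j : Fin n,
        ∫ ω, (B (t j.succ) ω - B (t j.castSucc) ω) *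
          (B (t j.succ) ω - B (t j.castSucc) ω) ∂μ)
        = ∑ j : Fin n, (t j.succ - t j.castSucc) ^ (2*H) :=
      Finset.sum_congr rfl fun j _ => hIdiag j
    have hjensen := sum_rpow_le_jensen (fun j : Fin n => t j.succ - t j.castSucc)
      (fun j => sub_nonneg.2 (hmono (Fin.castSucc_le_succ j))) hp0 hp1
    have hsum : (∑ j : Fin n, (t j.succ - t j.castSucc)) = t (Fin.last n) - t 0 :=
      fin_telescope n t
    rw [hsum] at hjensen
    have hT0 : 0 ≤ T := le_trans (htnn _) htT
    have h2 : (t (Fin.last n) - t 0) ^ (2*H) ≤ T ^ (2*H) :=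
      Real.rpow_le_rpow (sub_nonneg.2 hlast0) (by linarith) hp0.le
    have hnpos : 0 ≤ (n:ℝ) ^ (1 - 2*H) := Real.rpow_nonneg (Nat.cast_nonneg n) _
    have h3 := mul_le_mul_of_nonneg_left h2 hnpos
    rw [hdiag]
    nlinarith [hjensen, h3, hnn]
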